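/- For all x ∈ (0, π/2), one has 3·exp(−x²/6) − 2 < cos x < (π·exp(−(π−2)x²/(2π)) − 2)/(π − 2). -/

import Mathlib

open Real

private lemma nonneg_of_deriv (f f' : ℝ → ℝ) (hf : ∀ y, HasDerivAt f (f' y) y)
    (h0 : f 0 = 0) (hd : ∀ y, 0 ≤ y → 0 ≤ f' y) {x : ℝ} (hx : 0 ≤ x) : 0 ≤ f x := by
  have hdiff : Differentiable ℝ f := fun y => (hf y).differentiableAt
  have hm : MonotoneOn f (Set.Ici (0 : ℝ)) :=
    monotoneOn_of_deriv_nonneg (convex_Ici 0) hdiff.continuous.continuousOn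
      hdiff.differentiableOn
      (fun y hy => by
        rw [(hf y).deriv]
        exact hd y (le_of_lt (by simpa [interior_Ici] using hy)))
  have := hm Set.self_mem_Ici (Set.mem_Ici.mpr hx) hx
  simpa [h0] using this

private lemma sin_ge3 {x : ℝ} (hx : 0 ≤ x) : x - x ^ 3 / 6 ≤ Real.sin x := by
  have h := nonneg_of_deriv (fun y => Real.sin y - (y - y ^ 3 / 6))
    (fun y => Real.cos y - (1 - y ^ 2 / 2))
    (fun y => by
      have h1 := (Real.hasDerivAt_sin y).sub
        ((hasDerivAt_id' (x := y)).sub ((hasDerivAt_pow 3 y).div_const 6))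
      refine h1.congr_deriv ?_
      norm_num
      ring)
    (by norm_num)
    (fun y _ => sub_nonneg.mpr Real.one_sub_sq_div_two_le_cos)
    hx
  simpa [sub_nonneg] using h

private lemma cos_le4 {x : ℝ} (hx : 0 ≤ x) : Real.cos x ≤ 1 - x ^ 2 / 2 + x ^ 4 / 24 := by
  have h := nonneg_of_deriv (fun y => 1 - y ^ 2 / 2 + y ^ 4 / 24 - Real.cos y)
    (fun y => Real.sin y - (y - y ^ 3 / 6))
    (fun y => by
      have h1 := (((hasDerivAt_const y (1 : ℝ)).sub ((hasDerivAt_pow 2 y).div_const 2)).add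
        ((hasDerivAt_pow 4 y).div_const 24)).sub (Real.hasDerivAt_cos y)
      refine h1.congr_deriv ?_
      norm_num
      ring)
    (by norm_num)
    (fun y hy => sub_nonneg.mpr (sin_ge3 hy))
    hx
  linarith [h]

private lemma sin_le5 {x : ℝ} (hx : 0 ≤ x) :
    Real.sin x ≤ x - x ^ 3 / 6 + x ^ 5 / 120 := by
  have h := nonneg_of_deriv (fun y => y - y ^ 3 / 6 + y ^ 5 / 120 - Real.sin y)
    (fun y => 1 - y ^ 2 / 2 + y ^ 4 / 24 - Real.cos y)
    (fun y => by
      have h1 := (((hasDerivAt_id' (x := y)).sub ((hasDerivAt_pow 3 y).div_const 6)).add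
        ((hasDerivAt_pow 5 y).div_const 120)).sub (Real.hasDerivAt_sin y)
      refine h1.congr_deriv ?_
      norm_num
      ring)
    (by norm_num)
    (fun y hy => sub_nonneg.mpr (cos_le4 hy))
    hx
  linarith [h]

private lemma cos_ge6 {x : ℝ} (hx : 0 ≤ x) :
    1 - x ^ 2 / 2 + x ^ 4 / 24 - x ^ 6 / 720 ≤ Real.cos x := by
  have h := nonneg_of_deriv
    (fun y => Real.cos y - (1 - y ^ 2 / 2 + y ^ 4 / 24 - y ^ 6 / 720))
    (fun y => (y - y ^ 3 / 6 + y ^ 5 / 120) - Real.sin y)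
    (fun y => by
      have h1 := (Real.hasDerivAt_cos y).sub
        ((((hasDerivAt_const y (1 : ℝ)).sub ((hasDerivAt_pow 2 y).div_const 2)).add
          ((hasDerivAt_pow 4 y).div_const 24)).sub ((hasDerivAt_pow 6 y).div_const 720))
      refine h1.congr_deriv ?_
      norm_num
      ring)
    (by norm_num)
    (fun y hy => sub_nonneg.mpr (sin_le5 hy))
    hx
  simpa [sub_nonneg] using h

private lemma sin_ge7 {x : ℝ} (hx : 0 ≤ x) :
    x - x ^ 3 / 6 + x ^ 5 / 120 - x ^ 7 / 5040 ≤ Real.sin x := by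
  have h := nonneg_of_deriv
    (fun y => Real.sin y - (y - y ^ 3 / 6 + y ^ 5 / 120 - y ^ 7 / 5040))
    (fun y => Real.cos y - (1 - y ^ 2 / 2 + y ^ 4 / 24 - y ^ 6 / 720))
    (fun y => by
      have h1 := (Real.hasDerivAt_sin y).sub
        ((((hasDerivAt_id' (x := y)).sub ((hasDerivAt_pow 3 y).div_const 6)).add
          ((hasDerivAt_pow 5 y).div_const 120)).sub ((hasDerivAt_pow 7 y).div_const 5040))
      refine h1.congr_deriv ?_
      norm_num
      ring)
    (by norm_num)
    (fun y hy => sub_nonneg.mpr (cos_ge6 hy))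
    hx
  simpa [sub_nonneg] using h

private lemma cos_le8 {x : ℝ} (hx : 0 ≤ x) :
    Real.cos x ≤ 1 - x ^ 2 / 2 + x ^ 4 / 24 - x ^ 6 / 720 + x ^ 8 / 40320 := by
  have h := nonneg_of_deriv
    (fun y => 1 - y ^ 2 / 2 + y ^ 4 / 24 - y ^ 6 / 720 + y ^ 8 / 40320 - Real.cos y)
    (fun y => Real.sin y - (y - y ^ 3 / 6 + y ^ 5 / 120 - y ^ 7 / 5040))
    (fun y => by
      have h1 := (((((hasDerivAt_const y (1 : ℝ)).sub ((hasDerivAt_pow 2 y).div_const 2)).add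
        ((hasDerivAt_pow 4 y).div_const 24)).sub ((hasDerivAt_pow 6 y).div_const 720)).add
        ((hasDerivAt_pow 8 y).div_const 40320)).sub (Real.hasDerivAt_cos y)
      refine h1.congr_deriv ?_
      norm_num
      ring)
    (by norm_num)
    (fun y hy => sub_nonneg.mpr (sin_ge7 hy))
    hx
  linarith [h]

private lemma exp_neg_ub {t : ℝ} (ht0 : 0 ≤ t) (ht1 : t ≤ 1) :
    Real.exp (-t) ≤ 1 - t + t ^ 2 / 2 - t ^ 3 / 6 + 5 * t ^ 4 / 96 := by
  have hb : |(-t)| ≤ 1 := by rw [abs_neg, abs_of_nonneg ht0]; exact ht1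
  have h := Real.exp_bound hb (n := 4) (by norm_num)
  rw [abs_neg, abs_of_nonneg ht0] at h
  have hsum : ∑ m ∈ Finset.range 4, (-t) ^ m / (m.factorial : ℝ)
      = 1 - t + t ^ 2 / 2 - t ^ 3 / 6 := by
    simp [Finset.sum_range_succ, Nat.factorial]
    ring
  rw [hsum] at h
  have h2 := (abs_sub_le_iff.1 h).1
  have : (4 + 1 : ℝ) / ((4 : ℕ).factorial * 4) = 5 / 96 := by norm_num [Nat.factorial]
  norm_num [Nat.factorial] at h2
  linarith

private lemma exp_neg_lb {t : ℝ} (ht0 : 0 ≤ t) (ht1 : t ≤ 1) :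
    1 - t + t ^ 2 / 2 - t ^ 3 / 6 + t ^ 4 / 24 - t ^ 5 / 100 ≤ Real.exp (-t) := by
  have hb : |(-t)| ≤ 1 := by rw [abs_neg, abs_of_nonneg ht0]; exact ht1
  have h := Real.exp_bound hb (n := 5) (by norm_num)
  rw [abs_neg, abs_of_nonneg ht0] at h
  have hsum : ∑ m ∈ Finset.range 5, (-t) ^ m / (m.factorial : ℝ)
      = 1 - t + t ^ 2 / 2 - t ^ 3 / 6 + t ^ 4 / 24 := by
    simp [Finset.sum_range_succ, Nat.factorial]
    ring
  rw [hsum] at h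
  have h2 := (abs_sub_le_iff.1 h).2
  norm_num [Nat.factorial] at h2
  linarith

set_option maxHeartbeats 2000000 in
theorem stmt18 (x : ℝ) (h0 : 0 < x) (h1 : x < π / 2) :
    3 * Real.exp (-x ^ 2 / 6) - 2 < Real.cos x ∧
    Real.cos x < (π * Real.exp (-(π - 2) * x ^ 2 / (2 * π)) - 2) / (π - 2) := by
  have hπl := Real.pi_gt_d6
  have hπu := Real.pi_lt_d6
  have hπ0 : (0 : ℝ) < π := by linarith
  have hu0 : 0 < x ^ 2 := pow_pos h0 2
  have hu : x ^ 2 < π ^ 2 / 4 := by nlinarith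
  have huB : x ^ 2 < 247 / 100 := by nlinarith
  constructor
  · -- left inequality
    have hE := exp_neg_ub (t := x ^ 2 / 6) (by positivity) (by nlinarith)
    have hE' : Real.exp (-x ^ 2 / 6) ≤
        1 - x ^ 2 / 6 + x ^ 4 / 72 - x ^ 6 / 1296 + 5 * x ^ 8 / 124416 := by
      have harg : -x ^ 2 / 6 = -(x ^ 2 / 6) := by ring
      rw [harg]
      calc Real.exp (-(x ^ 2 / 6)) ≤ _ := hE
        _ = 1 - x ^ 2 / 6 + x ^ 4 / 72 - x ^ 6 / 1296 + 5 * x ^ 8 / 124416 := by ring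
    have hC := cos_ge6 h0.le
    nlinarith [pow_pos h0 6, mul_lt_mul_of_pos_left huB (pow_pos h0 6)]
  · -- right inequality
    have hb : (0 : ℝ) < π - 2 := by linarith
    set t : ℝ := (π - 2) * x ^ 2 / (2 * π) with ht_def
    have ht0 : 0 ≤ t := by positivity
    have ht1 : t ≤ 1 := by
      rw [ht_def, div_le_one (by positivity)]
      nlinarith
    have harg : -(π - 2) * x ^ 2 / (2 * π) = -t := by rw [ht_def]; ring
    rw [harg, lt_div_iff₀ hb]
    have hE := exp_neg_lb ht0 ht1
    have hC := cos_le8 h0.le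
    -- key positivity of the quadratic in u = x^2
    have c1 : 4 * π * (π - 3) > 177 / 100 := by nlinarith
    have c2 : (π - 2) ^ 2 - π ^ 2 / 15 ≤ 646 / 1000 := by nlinarith
    have c3 : π ^ 2 < 987 / 100 := by nlinarith
    have k1 : ((π - 2) ^ 2 - π ^ 2 / 15) * x ^ 2 ≤ 646 / 1000 * x ^ 2 :=
      mul_le_mul_of_nonneg_right c2 hu0.le
    have k1b : (646 : ℝ) / 1000 * x ^ 2 < 646 / 1000 * (247 / 100) := by linarith
    have h4 : (x ^ 2) ^ 2 < (247 / 100) ^ 2 := by nlinarith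
    have k2 : π ^ 2 * (x ^ 2) ^ 2 < (987 / 100) * (247 / 100) ^ 2 :=
      mul_lt_mul'' c3 h4 (by positivity) (by positivity)
    have key : 0 < 4 * π * (π - 3) - ((π - 2) ^ 2 - π ^ 2 / 15) * x ^ 2
        - π ^ 2 * (x ^ 2) ^ 2 / 840 := by linarith
    have expand : π * (1 - t + t ^ 2 / 2 - t ^ 3 / 6) - 2
        - (π - 2) * (1 - x ^ 2 / 2 + x ^ 4 / 24 - x ^ 6 / 720 + x ^ 8 / 40320)
        = (π - 2) * ((x ^ 2) ^ 2 * ((4 * π * (π - 3) - ((π - 2) ^ 2 - π ^ 2 / 15) * x ^ 2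
            - π ^ 2 * (x ^ 2) ^ 2 / 840) / (48 * π ^ 2))) := by
      rw [ht_def]
      field_simp
      ring
    have hpos : 0 < π * (1 - t + t ^ 2 / 2 - t ^ 3 / 6) - 2
        - (π - 2) * (1 - x ^ 2 / 2 + x ^ 4 / 24 - x ^ 6 / 720 + x ^ 8 / 40320) := by
      rw [expand]
      apply mul_pos hb
      apply mul_pos (by positivity)
      exact div_pos key (by positivity)
    have hextra : 0 ≤ t ^ 4 / 24 - t ^ 5 / 100 := by nlinarith [pow_nonneg ht0 4]
    have hextra2 : 0 ≤ π * (t ^ 4 / 24 - t ^ 5 / 100) := mul_nonneg hπ0.le hextra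
    have hEπ : π * (1 - t + t ^ 2 / 2 - t ^ 3 / 6 + t ^ 4 / 24 - t ^ 5 / 100)
        ≤ π * Real.exp (-t) := mul_le_mul_of_nonneg_left hE hπ0.le
    have hEπ' : π * (1 - t + t ^ 2 / 2 - t ^ 3 / 6) + π * (t ^ 4 / 24 - t ^ 5 / 100)
        ≤ π * Real.exp (-t) := by
      have heq : π * (1 - t + t ^ 2 / 2 - t ^ 3 / 6 + t ^ 4 / 24 - t ^ 5 / 100)
          = π * (1 - t + t ^ 2 / 2 - t ^ 3 / 6) + π * (t ^ 4 / 24 - t ^ 5 / 100) := by ring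
      linarith [heq ▸ hEπ]
    have hCb : (π - 2) * Real.cos x
        ≤ (π - 2) * (1 - x ^ 2 / 2 + x ^ 4 / 24 - x ^ 6 / 720 + x ^ 8 / 40320) :=
      mul_le_mul_of_nonneg_left hC hb.le
    linarith [hEπ', hCb, hpos, hextra2]
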